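/- For all real numbers a, b > 0 and all real θ, the inequality (1 − cos²θ)^a · (1 − cos θ)^b ≤ 2^{2a+b} · a^a · (a+b)^{a+b} / (2a+b)^{2a+b} holds. -/

import Mathlib

open Real

theorem cos_rpow_inequality (a b θ : ℝ) (ha : 0 < a) (hb : 0 < b) :
    (1 - Real.cos θ ^ 2) ^ a * (1 - Real.cos θ) ^ b ≤
      2 ^ (2 * a + b) * a ^ a * (a + b) ^ (a + b) / (2 * a + b) ^ (2 * a + b) := by
  have hx1 : Real.cos θ ≤ 1 := Real.cos_le_one θ
  have hx2 : -1 ≤ Real.cos θ := Real.neg_one_le_cos θ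
  set x := Real.cos θ with hxdef
  set u := 1 - x with hu_def
  set v := 1 + x with hv_def
  have hu : 0 ≤ u := by simp [hu_def]; linarith
  have hv : 0 ≤ v := by simp [hv_def]; linarith
  have huv : u + v = 2 := by simp [hu_def, hv_def]; ring
  have hab : 0 < a + b := by linarith
  have hs : 0 < 2 * a + b := by linarith
  set s := 2 * a + b with hs_def
  have h1 : 1 - x ^ 2 = u * v := by simp [hu_def, hv_def]; ring
  rw [h1, Real.mul_rpow hu hv]
  have hLHS : u ^ a * v ^ a * u ^ b = u ^ (a + b) * v ^ a := by
    rw [mul_right_comm, ← Real.rpow_add' hu (by positivity)]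
  rw [hLHS]
  set w1 := (a + b) / s with hw1_def
  set w2 := a / s with hw2_def
  have hw : w1 + w2 = 1 := by
    rw [hw1_def, hw2_def, ← add_div, div_eq_one_iff_eq hs.ne', hs_def]
    ring
  set p1 := u * s / (2 * (a + b)) with hp1_def
  set p2 := v * s / (2 * a) with hp2_def
  have hp1 : 0 ≤ p1 := by positivity
  have hp2 : 0 ≤ p2 := by positivity
  have hgm : p1 ^ w1 * p2 ^ w2 ≤ w1 * p1 + w2 * p2 :=
    Real.geom_mean_le_arith_mean2_weighted (by positivity) (by positivity) hp1 hp2 hw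
  have hsum : w1 * p1 + w2 * p2 = 1 := by
    have : u = 2 - v := by linarith
    rw [hw1_def, hw2_def, hp1_def, hp2_def, this]
    field_simp
    ring
  have hgm1 : p1 ^ w1 * p2 ^ w2 ≤ 1 := by rw [hsum] at hgm; exact hgm
  have hpow1 : p1 ^ (a + b) * p2 ^ a ≤ 1 := by
    have e1 : p1 ^ (a + b) = (p1 ^ w1) ^ s := by
      rw [← Real.rpow_mul hp1]
      congr 1
      field_simp [hw1_def]
      rw [hw1_def, div_mul_cancel₀ _ hs.ne']
    have e2 : p2 ^ a = (p2 ^ w2) ^ s := by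
      rw [← Real.rpow_mul hp2]
      congr 1
      field_simp [hw2_def]
      rw [hw2_def, div_mul_cancel₀ _ hs.ne']
    rw [e1, e2, ← Real.mul_rpow (Real.rpow_nonneg hp1 _) (Real.rpow_nonneg hp2 _)]
    calc (p1 ^ w1 * p2 ^ w2) ^ s ≤ 1 ^ s :=
          Real.rpow_le_rpow (by positivity) hgm1 hs.le
      _ = 1 := Real.one_rpow s
  have hu' : u = (2 * (a + b) / s) * p1 := by
    rw [hp1_def]
    field_simp
  have hv' : v = (2 * a / s) * p2 := by
    rw [hp2_def]
    field_simp
  have key : u ^ (a + b) * v ^ a ≤ (2 * (a + b) / s) ^ (a + b) * (2 * a / s) ^ a := by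
    rw [hu', hv', Real.mul_rpow (by positivity) hp1, Real.mul_rpow (by positivity) hp2]
    calc (2 * (a + b) / s) ^ (a + b) * p1 ^ (a + b) * ((2 * a / s) ^ a * p2 ^ a)
        = (2 * (a + b) / s) ^ (a + b) * (2 * a / s) ^ a * (p1 ^ (a + b) * p2 ^ a) := by ring
      _ ≤ (2 * (a + b) / s) ^ (a + b) * (2 * a / s) ^ a * 1 := by
          apply mul_le_mul_of_nonneg_left hpow1 (by positivity)
      _ = (2 * (a + b) / s) ^ (a + b) * (2 * a / s) ^ a := by ring
  refine key.trans_eq ?_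
  rw [Real.div_rpow (by positivity) hs.le, Real.div_rpow (by positivity) hs.le,
      Real.mul_rpow (by norm_num) hab.le, Real.mul_rpow (by norm_num) ha.le]
  have h2 : (2:ℝ) ^ s = 2 ^ (a + b) * 2 ^ a := by
    rw [← Real.rpow_add two_pos]; congr 1; rw [hs_def]; ring
  have h3 : s ^ s = s ^ (a + b) * s ^ a := by
    rw [← Real.rpow_add hs]; congr 1; rw [hs_def]; ring
  rw [h2, h3]
  have hsab : (0:ℝ) < s ^ (a + b) := Real.rpow_pos_of_pos hs _
  have hsa : (0:ℝ) < s ^ a := Real.rpow_pos_of_pos hs _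
  field_simp
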